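/- If v_1, …, v_n are unit vectors in C^d, and there exists a real number α with 0 < α < 1 such that |⟨v_i, v_j⟩| = α for all i ≠ j, then n ≤ d². -/

import Mathlib

open Finset Complex

/-- **Complex Gerzon bound.** If `v 1, …, v n` are unit vectors in `ℂ^d` whose pairwise
Hermitian inner products all have modulus `α` for some `0 < α < 1`, then `n ≤ d²`. -/
theorem complex_gerzon_bound (n d : ℕ) (v : Fin n → EuclideanSpace ℂ (Fin d))
    (hunit : ∀ i, ‖v i‖ = 1)
    (hangle : ∃ α : ℝ, 0 < α ∧ α < 1 ∧
      ∀ i j, i ≠ j → ‖(inner ℂ (v i) (v j) : ℂ)‖ = α) :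
    n ≤ d ^ 2 := by
  obtain ⟨α, hα0, hα1, hα⟩ := hangle
  set T : Fin n → EuclideanSpace ℂ (Fin d × Fin d) :=
    fun i => WithLp.toLp 2 (fun p : Fin d × Fin d => v i p.1 * (starRingEnd ℂ) (v i p.2)) with hT
  have hGram : ∀ i j, (inner ℂ (T i) (T j) : ℂ) =
      (α ^ 2 : ℂ) + (if i = j then (1 - α ^ 2 : ℂ) else 0) := by
    intro i j
    have h1 : (inner ℂ (T i) (T j) : ℂ) =
        (inner ℂ (v i) (v j) : ℂ) * (starRingEnd ℂ) (inner ℂ (v i) (v j) : ℂ) := by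
      have e1 : (inner ℂ (v i) (v j) : ℂ) = ∑ a, (starRingEnd ℂ) (v i a) * v j a := by
        rw [PiLp.inner_apply]; simp only [RCLike.inner_apply']
      have e2 : (starRingEnd ℂ) (inner ℂ (v i) (v j) : ℂ)
          = ∑ b, v i b * (starRingEnd ℂ) (v j b) := by
        rw [e1, map_sum]; simp [mul_comm]
      rw [e2, e1, Finset.sum_mul_sum]
      rw [show (inner ℂ (T i) (T j) : ℂ) = ∑ p : Fin d × Fin d,
        (starRingEnd ℂ) (T i p) * T j p by
        rw [PiLp.inner_apply]; simp only [RCLike.inner_apply']]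
      rw [Fintype.sum_prod_type]
      apply Finset.sum_congr rfl; intro a _
      apply Finset.sum_congr rfl; intro b _
      simp only [hT, map_mul, RingHomCompTriple.comp_apply, Complex.conj_conj, RingHom.id_apply]
      ring
    rcases eq_or_ne i j with rfl | hij
    · have : (inner ℂ (v i) (v i) : ℂ) = 1 := by
        rw [inner_self_eq_norm_sq_to_K, hunit]; norm_num
      rw [h1, this, if_pos rfl, map_one]; ring
    · rw [h1, Complex.mul_conj, if_neg hij, add_zero,
        Complex.normSq_eq_norm_sq, hα i j hij]
      push_cast; ring
  have hli : LinearIndependent ℂ T := by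
    rw [Fintype.linearIndependent_iff]
    intro g hg i
    have h0 : (inner ℂ (∑ k, g k • T k) (∑ k, g k • T k) : ℂ) = 0 := by
      rw [hg]; simp
    rw [sum_inner] at h0
    simp only [inner_sum, inner_smul_left, inner_smul_right, hGram] at h0
    have hrow : ∀ x : Fin n, (∑ y, g y * ((starRingEnd ℂ) (g x) *
        ((α:ℂ) ^ 2 + if x = y then 1 - (α:ℂ) ^ 2 else 0)))
        = (α:ℂ) ^ 2 * ((starRingEnd ℂ) (g x) * ∑ k, g k)
          + (1 - (α:ℂ) ^ 2) * ((starRingEnd ℂ) (g x) * g x) := by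
      intro x
      have hy : ∀ y : Fin n, g y * ((starRingEnd ℂ) (g x) *
          ((α:ℂ) ^ 2 + if x = y then 1 - (α:ℂ) ^ 2 else 0))
          = (α:ℂ) ^ 2 * ((starRingEnd ℂ) (g x) * g y)
            + (if x = y then (1 - (α:ℂ) ^ 2) * ((starRingEnd ℂ) (g x) * g y) else 0) := by
        intro y; split <;> ring
      rw [Finset.sum_congr rfl fun y _ => hy y, Finset.sum_add_distrib,
        Finset.sum_ite_eq]
      simp [Finset.mul_sum]
    rw [Finset.sum_congr rfl fun x _ => hrow x, Finset.sum_add_distrib,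
      ← Finset.mul_sum, ← Finset.mul_sum, ← Finset.sum_mul, ← map_sum] at h0
    simp only [← Complex.normSq_eq_conj_mul_self] at h0
    have key : ((1 - α ^ 2) * (∑ k, Complex.normSq (g k))
        + α ^ 2 * Complex.normSq (∑ k, g k) : ℝ) = 0 := by
      have hc : (((1 - α ^ 2) * (∑ k, Complex.normSq (g k))
          + α ^ 2 * Complex.normSq (∑ k, g k) : ℝ) : ℂ) = 0 := by
        push_cast
        linear_combination h0
      exact_mod_cast hc
    have h1 : (0:ℝ) ≤ ∑ k, Complex.normSq (g k) :=
      Finset.sum_nonneg fun k _ => Complex.normSq_nonneg _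
    have h2 : (0:ℝ) ≤ Complex.normSq (∑ k, g k) := Complex.normSq_nonneg _
    have hA : (∑ k, Complex.normSq (g k)) = 0 := by
      rcases h1.eq_or_lt with h | h
      · exact h.symm
      · exfalso
        have h3 : (0:ℝ) < 1 - α ^ 2 := by nlinarith
        nlinarith [mul_pos h3 h, mul_nonneg (sq_nonneg α) h2]
    have := (Finset.sum_eq_zero_iff_of_nonneg
      (fun k _ => Complex.normSq_nonneg (g k))).mp hA i (Finset.mem_univ i)
    exact Complex.normSq_eq_zero.mp this
  have hcard := hli.fintype_card_le_finrank
  simp only [Fintype.card_fin, finrank_euclideanSpace, Fintype.card_prod,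
    Fintype.card_fin] at hcard
  calc n ≤ d * d := hcard
  _ = d ^ 2 := (sq d).symm
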